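/- arXiv:0711.4347 — 2 statements merged into one kernel-verified Lean document; each statement's English description precedes it below -/
import Mathlib

section
/- If a finite group G has characteristic p, then G has local characteristic p; that is, every p-local subgroup of G (the normalizer of a nontrivial p-subgroup) has characteristic p. -/
/-- The largest normal `p`-subgroup `O_p(G)`: the join of all normal `p`-subgroups. -/
def pCore (p : ℕ) (G : Type*) [Group G] : Subgroup G :=
  ⨆ (N : Subgroup G) (_ : N.Normal) (_ : IsPGroup p N), N

/-- A group `G` has characteristic `p` if `C_G(O_p(G)) ≤ O_p(G)`. -/
def HasCharP (p : ℕ) (G : Type*) [Group G] : Prop :=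
  Subgroup.centralizer (pCore p G : Set G) ≤ pCore p G

/-- An element is `p`-central if it has order `p` and lies in the center of some
Sylow `p`-subgroup of `G`. -/
def IsPCentral (p : ℕ) {G : Type*} [Group G] (x : G) : Prop :=
  orderOf x = p ∧ ∃ S : Sylow p G,
    x ∈ (S : Subgroup G) ⊓ Subgroup.centralizer ((S : Subgroup G) : Set G)

/-- A `p`-subgroup `P` is `p`-centric if `Z(P) = P ⊓ C_G(P)` is a Sylow `p`-subgroup of
`C_G(P)`, expressed via maximality among `p`-subgroups of `C_G(P)`. -/
def IsPCentric (p : ℕ) {G : Type*} [Group G] (P : Subgroup G) : Prop :=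
  ∀ Q : Subgroup G, Q ≤ Subgroup.centralizer (P : Set G) → IsPGroup p Q →
    P ⊓ Subgroup.centralizer (P : Set G) ≤ Q →
    Q = P ⊓ Subgroup.centralizer (P : Set G)

/-- The step `P ↦ O_p(N_G(P))`, viewed as a subgroup of `G`. -/
def pRadicalStep (p : ℕ) {G : Type*} [Group G] (P : Subgroup G) : Subgroup G :=
  (pCore p ↥(Subgroup.normalizer (P : Set G))).map (Subgroup.normalizer (P : Set G)).subtype

/-- The chain `P₀ = Q`, `P_{i+1} = O_p(N_G(P_i))`. -/
def radChain (p : ℕ) {G : Type*} [Group G] (Q : Subgroup G) : ℕ → Subgroup G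
  | 0 => Q
  | n + 1 => pRadicalStep p (radChain p Q n)

/-- `G` has local characteristic `p`: every `p`-local subgroup has characteristic `p`. -/
def LocalCharP (p : ℕ) (G : Type*) [Group G] : Prop :=
  ∀ P : Subgroup G, P ≠ ⊥ → IsPGroup p P → HasCharP p ↥(Subgroup.normalizer (P : Set G))

/-- `G` has parabolic characteristic `p`: every `p`-local subgroup containing a Sylow
`p`-subgroup of `G` has characteristic `p`. -/
def ParabolicCharP (p : ℕ) (G : Type*) [Group G] : Prop :=
  ∀ P : Subgroup G, P ≠ ⊥ → IsPGroup p P →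
    (∃ S : Sylow p G, (S : Subgroup G) ≤ (Subgroup.normalizer (P : Set G))) → HasCharP p ↥(Subgroup.normalizer (P : Set G))

namespace CharPAux

open Subgroup
open scoped commutatorElement

variable {p : ℕ} {G : Type*} [Group G]

theorem le_pCore {N : Subgroup G} (hN : N.Normal) (hNp : IsPGroup p N) :
    N ≤ pCore p G := by
  have h : N ≤ ⨆ (_ : N.Normal), ⨆ (_ : IsPGroup p N), N := by
    rw [iSup_pos hN, iSup_pos hNp]
  exact h.trans (le_iSup (fun N : Subgroup G => ⨆ (_ : N.Normal), ⨆ (_ : IsPGroup p N), N) N)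

theorem pCore_le {K : Subgroup G} (hK : ∀ N : Subgroup G, N.Normal → IsPGroup p N → N ≤ K) :
    pCore p G ≤ K :=
  iSup_le fun N => iSup_le fun hN => iSup_le fun hNp => hK N hN hNp

theorem pCore_normal : (pCore p G).Normal := by
  constructor
  intro n hn g
  have key : pCore p G ≤ (pCore p G).comap (MulAut.conj g).toMonoidHom := by
    refine pCore_le fun N hN hNp => ?_
    rw [← Subgroup.map_le_iff_le_comap]
    refine le_trans ?_ (le_pCore hN hNp)
    rintro y ⟨m, hm, rfl⟩
    exact hN.conj_mem m hm g
  have := key hn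
  simpa using this

theorem pCore_isPGroup [Finite G] : IsPGroup p (pCore p G) := by
  classical
  obtain ⟨M, hM, hmax⟩ := Set.Finite.exists_maximalFor (id : Subgroup G → Subgroup G)
    {N : Subgroup G | N.Normal ∧ IsPGroup p N} (Set.toFinite _)
    ⟨⊥, inferInstance, IsPGroup.of_bot⟩
  have hall : ∀ N : Subgroup G, N.Normal → IsPGroup p N → N ≤ M := by
    intro N hN hNp
    haveI := hM.1
    haveI := hN
    have hsupN : (M ⊔ N).Normal := Subgroup.sup_normal M N
    have hsupP : IsPGroup p (M ⊔ N : Subgroup G) := IsPGroup.to_sup_of_normal_right hM.2 hNp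
    have heq : M = M ⊔ N := le_antisymm le_sup_left (hmax ⟨hsupN, hsupP⟩ le_sup_left)
    rw [heq]
    exact le_sup_right
  have : pCore p G = M := le_antisymm (pCore_le hall) (le_pCore hM.1 hM.2)
  rw [this]
  exact hM.2

/-- Coprime action: `[V,x,x] = 1` (elementwise) implies `[V,x] = 1`. -/
theorem comm_eq_one_of_coprime [Finite G] {V : Subgroup G} {x : G}
    (hx : x ∈ (Subgroup.normalizer (V : Set _))) (hco : Nat.Coprime (orderOf x) (Nat.card V))
    (h2 : ∀ v ∈ V, Commute x ⁅v, x⁆) : ∀ v ∈ V, ⁅v, x⁆ = 1 := by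
  intro v hv
  have hmem : ⁅v, x⁆ ∈ V := by
    have hxv : x * v⁻¹ * x⁻¹ ∈ V := by
      have := (Subgroup.mem_normalizer_iff.mp hx v⁻¹).mp (inv_mem hv)
      exact this
    have : ⁅v, x⁆ = v * (x * v⁻¹ * x⁻¹) := by group
    rw [this]
    exact mul_mem hv hxv
  have key : ∀ k : ℕ, ⁅v, x ^ k⁆ = ⁅v, x⁆ ^ k := by
    intro k
    induction k with
    | zero => simp
    | succ k ih =>
      have hstep : ⁅v, x ^ (k + 1)⁆ = ⁅v, x⁆ * (x * ⁅v, x ^ k⁆ * x⁻¹) := by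
        simp only [commutatorElement_def, pow_succ']
        group
      rw [hstep, ih, ((h2 v hv).pow_right k).eq]
      group
  have hpow : ⁅v, x⁆ ^ orderOf x = 1 := by
    rw [← key, pow_orderOf_eq_one, commutatorElement_def]
    group
  have hd1 : orderOf ⁅v, x⁆ ∣ orderOf x := orderOf_dvd_of_pow_eq_one hpow
  have hd2 : orderOf ⁅v, x⁆ ∣ Nat.card V := by
    have := orderOf_dvd_natCard (⟨⁅v, x⁆, hmem⟩ : V)
    rwa [← orderOf_injective V.subtype Subtype.coe_injective ⟨⁅v, x⁆, hmem⟩] at this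
  have : orderOf ⁅v, x⁆ ∣ 1 := hco ▸ Nat.dvd_gcd hd1 hd2
  rw [orderOf_eq_one_iff.mp (Nat.eq_one_of_dvd_one this)]


universe u

private theorem conj_fix {H : Type*} [Group H] {a z : H} (h : a * z = z * a) :
    a * z * a⁻¹ = z := by rw [h, mul_inv_cancel_right]

private theorem conj_fix' {H : Type*} [Group H] {a z : H} (h : a * z = z * a) :
    a⁻¹ * z * a = z := by rw [mul_assoc, ← h, inv_mul_cancel_left]

/-- Thompson-style A×B lemma, elementwise form, by strong induction on `|V|`. -/
theorem axb {p : ℕ} [Fact p.Prime] :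
    ∀ (n : ℕ) {H : Type u} [Group H] [Finite H] (V B : Subgroup H) (x : H),
      Nat.card V = n →
      x ∈ (Subgroup.normalizer (V : Set _)) → B ≤ (Subgroup.normalizer (V : Set _)) →
      IsPGroup p V → IsPGroup p B →
      (∀ b ∈ B, Commute x b) →
      Nat.Coprime (orderOf x) (Nat.card V) →
      (∀ v ∈ V, (∀ b ∈ B, Commute v b) → Commute v x) →
      ∀ v ∈ V, Commute v x := by
  intro n
  induction n using Nat.strong_induction_on with
  | _ n IH =>
  intro H _ _ V B x hcard hxN hBN hVp hBp hxB hco hmain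
  classical
  set Z : Subgroup H := (V ⊓ Subgroup.centralizer (V : Set H)) ⊓ Subgroup.centralizer (B : Set H)
    with hZdef
  have hZV : Z ≤ V := fun z hz => ((Subgroup.mem_inf.mp (Subgroup.mem_inf.mp hz).1)).1
  have hZcV : ∀ z ∈ Z, ∀ v ∈ V, v * z = z * v := fun z hz =>
    Subgroup.mem_centralizer_iff.mp ((Subgroup.mem_inf.mp (Subgroup.mem_inf.mp hz).1)).2
  have hZcB : ∀ z ∈ Z, ∀ b ∈ B, b * z = z * b := fun z hz =>
    Subgroup.mem_centralizer_iff.mp (Subgroup.mem_inf.mp hz).2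
  have hZx : ∀ z ∈ Z, Commute z x := fun z hz =>
    hmain z (hZV hz) (fun b hb => (hZcB z hz b hb).symm)
  -- case split on whether all commutators [V,B] lie in Z
  by_cases hUV : ∀ v ∈ V, ∀ b ∈ B, ⁅v, b⁆ ∈ Z
  · -- in this case, each ⁅v,x⁆ centralizes B, hence commutes with x; coprime lemma finishes
    have h2 : ∀ v ∈ V, Commute x ⁅v, x⁆ := by
      intro v hv
      have hwV : x * v⁻¹ * x⁻¹ ∈ V :=
        (Subgroup.mem_normalizer_iff.mp hxN v⁻¹).mp (inv_mem hv)
      have hd : ⁅v, x⁆ = v * (x * v⁻¹ * x⁻¹) := by group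
      have hdV : ⁅v, x⁆ ∈ V := hd ▸ mul_mem hv hwV
      have hdB : ∀ b ∈ B, Commute ⁅v, x⁆ b := by
        intro b hb
        have hc : ⁅v, b⁆ ∈ Z := hUV v hv b hb
        have hcinv : ⁅v, b⁆⁻¹ ∈ Z := Z.inv_mem hc
        have e2 : x⁻¹ * b * x = b := conj_fix' (hxB b hb)
        have e1 : ⁅x * v⁻¹ * x⁻¹, b⁆ = x * (v⁻¹ * ⁅v, x⁻¹ * b * x⁆⁻¹ * v) * x⁻¹ := by
          group
        rw [e2] at e1
        have e4 : v⁻¹ * ⁅v, b⁆⁻¹ * v = ⁅v, b⁆⁻¹ := conj_fix' (hZcV _ hcinv v hv)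
        have e5 : x * ⁅v, b⁆⁻¹ * x⁻¹ = ⁅v, b⁆⁻¹ := conj_fix ((hZx _ hcinv).symm.eq)
        have e6 : ⁅x * v⁻¹ * x⁻¹, b⁆ = ⁅v, b⁆⁻¹ := by rw [e1, e4, e5]
        have e7 : ⁅⁅v, x⁆, b⁆ = 1 := by
          have emul : ⁅v * (x * v⁻¹ * x⁻¹), b⁆
              = v * ⁅x * v⁻¹ * x⁻¹, b⁆ * v⁻¹ * ⁅v, b⁆ := by group
          rw [hd, emul, e6, conj_fix (hZcV _ hcinv v hv), inv_mul_cancel]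
        exact commutatorElement_eq_one_iff_commute.mp e7
      exact (hmain _ hdV hdB).symm
    intro v hv
    exact commutatorElement_eq_one_iff_commute.mp
      (CharPAux.comm_eq_one_of_coprime hxN hco h2 v hv)
  · -- main case: build U, find central fixed point, pass to quotient
    push_neg at hUV
    obtain ⟨v₁, hv₁V, b₁, hb₁B, hv₁b₁⟩ := hUV
    -- the subgroup U = {v ∈ V | [v,B] ⊆ Z}
    set U : Subgroup H :=
      { carrier := {v : H | v ∈ V ∧ ∀ b ∈ B, ⁅v, b⁆ ∈ Z}
        one_mem' := ⟨V.one_mem, fun b _ => by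
          rw [show ⁅(1 : H), b⁆ = 1 by group]; exact Z.one_mem⟩
        mul_mem' := by
          rintro a c ⟨haV, haB⟩ ⟨hcV, hcB⟩
          refine ⟨mul_mem haV hcV, fun b hb => ?_⟩
          have emul : ⁅a * c, b⁆ = a * ⁅c, b⁆ * a⁻¹ * ⁅a, b⁆ := by group
          rw [emul, conj_fix (hZcV _ (hcB b hb) a haV)]
          exact Z.mul_mem (hcB b hb) (haB b hb)
        inv_mem' := by
          rintro a ⟨haV, haB⟩
          refine ⟨inv_mem haV, fun b hb => ?_⟩
          have einv : ⁅a⁻¹, b⁆ = a⁻¹ * ⁅a, b⁆⁻¹ * a := by group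
          rw [einv, conj_fix' (hZcV _ (Z.inv_mem (haB b hb)) a haV)]
          exact Z.inv_mem (haB b hb) } with hUdef
    have hUle : U ≤ V := fun u hu => hu.1
    have hUmem : ∀ u, u ∈ U ↔ u ∈ V ∧ ∀ b ∈ B, ⁅u, b⁆ ∈ Z := fun u => Iff.rfl
    -- conjugation stability of U
    have hUconj : ∀ g : H, g ∈ (Subgroup.normalizer (V : Set _)) → (∀ b ∈ B, g⁻¹ * b * g ∈ B) →
        (∀ z ∈ Z, g * z * g⁻¹ = z) → ∀ u ∈ U, g * u * g⁻¹ ∈ U := by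
      intro g hg1 hg2 hg3 u hu
      obtain ⟨huV, huB⟩ := (hUmem u).mp hu
      refine ⟨(Subgroup.mem_normalizer_iff.mp hg1 u).mp huV, fun b hb => ?_⟩
      have econj : ⁅g * u * g⁻¹, b⁆ = g * ⁅u, g⁻¹ * b * g⁆ * g⁻¹ := by group
      rw [econj, hg3 _ (huB _ (hg2 b hb))]
      exact huB _ (hg2 b hb)
    have hxfix : ∀ z ∈ Z, x * z * x⁻¹ = z := fun z hz => conj_fix ((hZx z hz).symm.eq)
    have hxinvfix : ∀ z ∈ Z, x⁻¹ * z * x = z := fun z hz => conj_fix' ((hZx z hz).symm.eq)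
    have hbfix : ∀ b ∈ B, ∀ z ∈ Z, b * z * b⁻¹ = z := fun b hb z hz => conj_fix (hZcB z hz b hb)
    have hxUN : x ∈ (Subgroup.normalizer (U : Set _)) := by
      rw [Subgroup.mem_normalizer_iff]
      intro u
      constructor
      · exact fun hu => hUconj x hxN (fun b hb => by rw [conj_fix' (hxB b hb)]; exact hb) hxfix u hu
      · intro hu
        have := hUconj x⁻¹ (inv_mem hxN)
          (fun b hb => by rw [inv_inv, conj_fix (hxB b hb)]; exact hb)
          (fun z hz => by rw [inv_inv]; exact hxinvfix z hz) _ hu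
        rwa [show x⁻¹ * (x * u * x⁻¹) * x⁻¹⁻¹ = u by group] at this
    have hBUN : B ≤ (Subgroup.normalizer (U : Set _)) := by
      intro b hb
      rw [Subgroup.mem_normalizer_iff]
      intro u
      constructor
      · exact fun hu => hUconj b (hBN hb)
          (fun b' hb' => mul_mem (mul_mem (inv_mem hb) hb') hb) (hbfix b hb) u hu
      · intro hu
        have := hUconj b⁻¹ (inv_mem (hBN hb))
          (fun b' hb' => by rw [inv_inv]; exact mul_mem (mul_mem hb hb') (inv_mem hb))
          (fun z hz => by rw [inv_inv]; exact conj_fix' (hZcB z hz b hb)) _ hu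
        rwa [show b⁻¹ * (b * u * b⁻¹) * b⁻¹⁻¹ = u by group] at this
    -- U is a proper subgroup of V
    have hv₁U : v₁ ∉ U := fun h => hv₁b₁ (((hUmem v₁).mp h).2 b₁ hb₁B)
    have hVnleU : ¬ V ≤ U := fun h => hv₁U (h hv₁V)
    have hcardU : Nat.card U < Nat.card V := by
      refine (Subgroup.card_le_of_le hUle).lt_of_ne fun h => ?_
      exact hVnleU (le_of_eq (Subgroup.eq_of_le_of_card_ge hUle h.ge).symm)
    -- induction applied to U
    have hU1 : ∀ u ∈ U, Commute u x := by
      refine IH (Nat.card U) (hcard ▸ hcardU) U B x rfl hxUN hBUN (hVp.to_le hUle) hBp hxB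
        (hco.coprime_dvd_right (Subgroup.card_dvd_of_le hUle))
        (fun v hv hcomm => hmain v (hUle hv) hcomm)
    -- find a nontrivial element of Z
    have hv₁ne : v₁ ≠ 1 := by
      rintro rfl
      exact hv₁b₁ (by rw [show ⁅(1 : H), b₁⁆ = 1 by group]; exact Z.one_mem)
    haveI hVnt : Nontrivial V :=
      ⟨⟨⟨v₁, hv₁V⟩, 1, by simp [Subtype.ext_iff, hv₁ne]⟩⟩
    set Y : Subgroup H := V ⊓ Subgroup.centralizer (V : Set H) with hYdef
    have hYp : IsPGroup p Y := hVp.to_inf_left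
    -- Y is nontrivial (center of a nontrivial p-group)
    haveI hYnt : Nontrivial Y := by
      haveI := hVp.center_nontrivial
      obtain ⟨⟨z₁, hz₁⟩, hz₁ne⟩ := exists_ne (1 : Subgroup.center V)
      have hz₁mem : (z₁ : H) ∈ Y := by
        refine Subgroup.mem_inf.mpr ⟨z₁.2, Subgroup.mem_centralizer_iff.mpr fun h hh => ?_⟩
        have := Subgroup.mem_center_iff.mp hz₁ ⟨h, hh⟩
        exact congrArg Subtype.val this
      have hz₁ne' : (z₁ : H) ≠ 1 := by
        intro h
        exact hz₁ne (Subtype.ext (Subtype.ext h))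
      exact ⟨⟨⟨(z₁ : H), hz₁mem⟩, 1, by simp [Subtype.ext_iff, hz₁ne']⟩⟩
    -- B acts on Y by conjugation
    have hconjY : ∀ (b : B) (y : Y), (b : H) * y * (b : H)⁻¹ ∈ Y := by
      rintro ⟨b, hb⟩ ⟨y, hy⟩
      obtain ⟨hyV, hyC⟩ := Subgroup.mem_inf.mp hy
      refine Subgroup.mem_inf.mpr ⟨(Subgroup.mem_normalizer_iff.mp (hBN hb) y).mp hyV,
        Subgroup.mem_centralizer_iff.mpr fun h hh => ?_⟩
      have hh' : b⁻¹ * h * b ∈ V := by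
        have := (Subgroup.mem_normalizer_iff.mp (inv_mem (hBN hb)) h).mp hh
        rwa [inv_inv] at this
      have hcomm := Subgroup.mem_centralizer_iff.mp hyC _ hh'
      calc h * (b * y * b⁻¹) = b * ((b⁻¹ * h * b) * y) * b⁻¹ := by group
        _ = b * (y * (b⁻¹ * h * b)) * b⁻¹ := by rw [hcomm]
        _ = b * y * b⁻¹ * h := by group
    letI actY : MulAction B Y :=
      { smul := fun b y => ⟨(b : H) * y * (b : H)⁻¹, hconjY b y⟩
        one_smul := fun y => Subtype.ext (by
          show ((1 : B) : H) * y * ((1 : B) : H)⁻¹ = y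
          simp)
        mul_smul := fun b c y => Subtype.ext (by
          show ((b * c : B) : H) * y * ((b * c : B) : H)⁻¹
            = (b : H) * ((c : H) * y * (c : H)⁻¹) * (b : H)⁻¹
          push_cast
          group) }
    have hsmul_def : ∀ (b : B) (y : Y), ((b • y : Y) : H) = (b : H) * y * (b : H)⁻¹ :=
      fun b y => rfl
    have hfix1 : (1 : Y) ∈ MulAction.fixedPoints B Y := by
      intro b
      refine Subtype.ext ?_
      rw [hsmul_def]
      simp
    have hdvdY : p ∣ Nat.card Y := by
      obtain ⟨k, hk⟩ := IsPGroup.iff_card.mp hYp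
      have : 1 < Nat.card Y := Finite.one_lt_card
      rcases Nat.eq_zero_or_pos k with hk0 | hkpos
      · rw [hk0, pow_zero] at hk; omega
      · rw [hk]; exact dvd_pow_self p hkpos.ne'
    obtain ⟨y₀, hy₀fix, hy₀ne⟩ :=
      hBp.exists_fixed_point_of_prime_dvd_card_of_fixed_point (↥Y) hdvdY hfix1
    have hz₀Z : (y₀ : H) ∈ Z := by
      refine Subgroup.mem_inf.mpr ⟨y₀.2, Subgroup.mem_centralizer_iff.mpr fun b hb => ?_⟩
      have := hy₀fix ⟨b, hb⟩
      have hco' : (b : H) * y₀ * (b : H)⁻¹ = (y₀ : H) := by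
        rw [← hsmul_def ⟨b, hb⟩ y₀, this]
      calc b * (y₀ : H) = (b * y₀ * b⁻¹) * b := by group
        _ = (y₀ : H) * b := by rw [hco']
    have hz₀ne : (y₀ : H) ≠ 1 := by
      intro h
      exact hy₀ne (Subtype.ext h.symm)
    -- the quotient setup
    set K : Subgroup H := V ⊔ (Subgroup.zpowers x ⊔ B) with hKdef
    have hVK : V ≤ K := le_sup_left
    have hxK : x ∈ K := (le_trans le_sup_left le_sup_right : Subgroup.zpowers x ≤ K)
      (Subgroup.mem_zpowers x)
    have hBK : B ≤ K := le_trans le_sup_right le_sup_right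
    have hKc : K ≤ Subgroup.centralizer (Z : Set H) := by
      refine sup_le ?_ (sup_le ?_ ?_)
      · exact fun v hv => Subgroup.mem_centralizer_iff.mpr fun z hz => (hZcV z hz v hv).symm
      · rw [Subgroup.zpowers_le]
        exact Subgroup.mem_centralizer_iff.mpr fun z hz => (hZx z hz).eq
      · exact fun b hb => Subgroup.mem_centralizer_iff.mpr fun z hz => (hZcB z hz b hb).symm
    have hKnormZ : ∀ g ∈ K, ∀ z ∈ Z, g * z * g⁻¹ = z := fun g hg z hz =>
      conj_fix ((Subgroup.mem_centralizer_iff.mp (hKc hg) z hz).symm)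
    set Z₀ : Subgroup K := Z.subgroupOf K with hZ₀def
    haveI hZ₀n : Z₀.Normal := by
      constructor
      intro m hm g
      rw [Subgroup.mem_subgroupOf] at hm ⊢
      show ((g : H) * m * (g : H)⁻¹) ∈ Z
      rw [hKnormZ (g : H) g.2 m hm]
      exact hm
    set π : K →* K ⧸ Z₀ := QuotientGroup.mk' Z₀ with hπdef
    have hπker : ∀ k : K, π k = 1 ↔ (k : H) ∈ Z := by
      intro k
      rw [hπdef, QuotientGroup.mk'_apply, QuotientGroup.eq_one_iff, Subgroup.mem_subgroupOf]
    set V₀ : Subgroup K := V.subgroupOf K with hV₀def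
    set B₀ : Subgroup K := B.subgroupOf K with hB₀def
    set x₀ : K := ⟨x, hxK⟩ with hx₀def
    set V' : Subgroup (K ⧸ Z₀) := V₀.map π with hV'def
    set B' : Subgroup (K ⧸ Z₀) := B₀.map π with hB'def
    -- cardinality drop
    set f : V →* K ⧸ Z₀ := π.comp (Subgroup.inclusion hVK) with hfdef
    have hfrange : f.range = V' := by
      rw [hfdef, MonoidHom.range_comp, Subgroup.inclusion_range]
    have hcardeq : Nat.card V = Nat.card V' * Nat.card f.ker := by
      rw [Subgroup.card_eq_card_quotient_mul_card_subgroup f.ker]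
      congr 1
      rw [← hfrange]
      exact Nat.card_congr (QuotientGroup.quotientKerEquivRange f).toEquiv
    have hkernt : Nontrivial f.ker := by
      have hz₀V : (y₀ : H) ∈ V := hZV hz₀Z
      have hmem : (⟨(y₀ : H), hz₀V⟩ : V) ∈ f.ker := by
        rw [MonoidHom.mem_ker, hfdef, MonoidHom.comp_apply]
        exact (hπker _).mpr hz₀Z
      refine ⟨⟨⟨⟨(y₀ : H), hz₀V⟩, hmem⟩, 1, fun h => ?_⟩⟩
      have h2 : ((⟨(y₀ : H), hz₀V⟩ : V) : H) = ((1 : V) : H) :=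
        congrArg Subtype.val (congrArg Subtype.val h)
      exact hz₀ne h2
    have hcardV' : Nat.card V' < n := by
      rw [← hcard, hcardeq]
      have h1 : 0 < Nat.card V' := Nat.card_pos
      have h2 : 1 < Nat.card f.ker := Finite.one_lt_card
      exact lt_mul_of_one_lt_right h1 h2
    -- normalizer transfer
    have hnormQ : ∀ g : K, (g : H) ∈ (Subgroup.normalizer (V : Set _)) → π g ∈ (Subgroup.normalizer (V' : Set _)) := by
      intro g hg
      rw [Subgroup.mem_normalizer_iff]
      intro q
      constructor
      · intro hq
        rw [hV'def, Subgroup.mem_map] at hq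
        obtain ⟨va, hva, rfl⟩ := hq
        rw [hV'def, Subgroup.mem_map]
        refine ⟨g * va * g⁻¹, ?_, by rw [map_mul, map_mul, map_inv]⟩
        rw [Subgroup.mem_subgroupOf] at hva ⊢
        exact (Subgroup.mem_normalizer_iff.mp hg _).mp hva
      · intro hq
        rw [hV'def, Subgroup.mem_map] at hq
        obtain ⟨wa, hwa, heq⟩ := hq
        rw [hV'def, Subgroup.mem_map]
        refine ⟨g⁻¹ * wa * g, ?_, ?_⟩
        · rw [Subgroup.mem_subgroupOf] at hwa ⊢
          have := (Subgroup.mem_normalizer_iff.mp (inv_mem hg) (wa : H)).mp hwa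
          rwa [inv_inv] at this
        · rw [map_mul, map_mul, map_inv, heq]
          group
    have hx'N : π x₀ ∈ (Subgroup.normalizer (V' : Set _)) := hnormQ x₀ hxN
    have hB'N : B' ≤ (Subgroup.normalizer (V' : Set _)) := by
      rintro q hq
      rw [hB'def, Subgroup.mem_map] at hq
      obtain ⟨ba, hba, rfl⟩ := hq
      exact hnormQ ba (hBN (Subgroup.mem_subgroupOf.mp hba))
    have hV'p : IsPGroup p V' := (IsPGroup.comap_subtype hVp).map π
    have hB'p : IsPGroup p B' := (IsPGroup.comap_subtype hBp).map π
    have hx'B' : ∀ b' ∈ B', Commute (π x₀) b' := by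
      rintro b' hb'
      rw [hB'def, Subgroup.mem_map] at hb'
      obtain ⟨ba, hba, rfl⟩ := hb'
      have : Commute x₀ ba := Subtype.ext (hxB _ (Subgroup.mem_subgroupOf.mp hba))
      exact this.map π
    have hx'co : Nat.Coprime (orderOf (π x₀)) (Nat.card V') := by
      have h1 : orderOf x₀ = orderOf x := by
        have := orderOf_injective K.subtype Subtype.coe_injective x₀
        exact this.symm
      have h2 : orderOf (π x₀) ∣ orderOf x := h1 ▸ orderOf_map_dvd π x₀
      have h3 : Nat.card V' ∣ Nat.card V := Dvd.intro _ hcardeq.symm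
      exact Nat.Coprime.coprime_dvd_right h3 (hco.coprime_dvd_left h2)
    have hmain' : ∀ q ∈ V', (∀ b' ∈ B', Commute q b') → Commute q (π x₀) := by
      intro q hq hcomm
      rw [hV'def, Subgroup.mem_map] at hq
      obtain ⟨va, hva, rfl⟩ := hq
      have hvV : (va : H) ∈ V := Subgroup.mem_subgroupOf.mp hva
      have hvU : (va : H) ∈ U := by
        refine (hUmem _).mpr ⟨hvV, fun b hb => ?_⟩
        have hba : (⟨b, hBK hb⟩ : K) ∈ B₀ := Subgroup.mem_subgroupOf.mpr hb
        have hcm := hcomm (π ⟨b, hBK hb⟩) (by rw [hB'def, Subgroup.mem_map]; exact ⟨_, hba, rfl⟩)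
        have h1 : π ⁅va, (⟨b, hBK hb⟩ : K)⁆ = 1 := by
          rw [map_commutatorElement]
          exact commutatorElement_eq_one_iff_commute.mpr hcm
        have h3 := (hπker _).mp h1
        simpa [commutatorElement_def] using h3
      have := hU1 _ hvU
      have hcm' : Commute va x₀ := Subtype.ext (by
        simpa [Subgroup.coe_mul] using this.eq)
      exact hcm'.map π
    have hQall : ∀ q ∈ V', Commute q (π x₀) :=
      IH (Nat.card V') hcardV' V' B' (π x₀) rfl hx'N hB'N hV'p hB'p hx'B' hx'co hmain'
    -- pull back: [v,x] ∈ Z for all v ∈ V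
    have hfin : ∀ v ∈ V, ⁅v, x⁆ ∈ Z := by
      intro v hv
      have hva : (⟨v, hVK hv⟩ : K) ∈ V₀ := Subgroup.mem_subgroupOf.mpr hv
      have := hQall (π ⟨v, hVK hv⟩) (by rw [hV'def, Subgroup.mem_map]; exact ⟨_, hva, rfl⟩)
      have h1 : π ⁅(⟨v, hVK hv⟩ : K), x₀⁆ = 1 := by
        rw [map_commutatorElement]
        exact commutatorElement_eq_one_iff_commute.mpr this
      have h3 := (hπker _).mp h1
      simpa [commutatorElement_def] using h3
    have h2 : ∀ v ∈ V, Commute x ⁅v, x⁆ := fun v hv => (hZx _ (hfin v hv)).symm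
    intro v hv
    exact commutatorElement_eq_one_iff_commute.mp
      (CharPAux.comm_eq_one_of_coprime hxN hco h2 v hv)


theorem centralizer_normal {G : Type*} [Group G] {R : Subgroup G} (hR : R.Normal) :
    (Subgroup.centralizer (R : Set G)).Normal := by
  constructor
  intro c hc g
  rw [Subgroup.mem_centralizer_iff] at hc ⊢
  intro h hh
  have h' : g⁻¹ * h * g ∈ R := by
    have := hR.conj_mem h hh g⁻¹
    simpa using this
  have hcomm := hc _ h'
  calc h * (g * c * g⁻¹) = g * ((g⁻¹ * h * g) * c) * g⁻¹ := by group
    _ = g * (c * (g⁻¹ * h * g)) * g⁻¹ := by rw [hcomm]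
    _ = (g * c * g⁻¹) * h := by group

theorem normal_subgroupOf_of_normal {G : Type*} [Group G] {V N : Subgroup G} (hV : V.Normal) :
    (V.subgroupOf N).Normal := by
  constructor
  intro m hm g
  rw [Subgroup.mem_subgroupOf] at hm ⊢
  show ((g : G) * m * (g : G)⁻¹) ∈ V
  exact hV.conj_mem _ hm _

end CharPAux

/-- If `G` has characteristic `p` then `G` has local characteristic `p`. -/
theorem stmt2 (p : ℕ) [Fact p.Prime] (G : Type*) [Group G] [Finite G]
    (hG : HasCharP p G) :
    ∀ P : Subgroup G, P ≠ ⊥ → IsPGroup p P → HasCharP p ↥(Subgroup.normalizer (P : Set G)) := by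
  intro P _hP hPp
  set N := (Subgroup.normalizer (P : Set G)) with hNdef
  set R : Subgroup ↥N := pCore p ↥N with hRdef
  have hRn : R.Normal := CharPAux.pCore_normal
  set C : Subgroup ↥N := Subgroup.centralizer (R : Set ↥N) with hCdef
  have hCn : C.Normal := CharPAux.centralizer_normal hRn
  have key : ∀ y : ↥N, y ∈ C → Nat.Coprime (orderOf y) p → y = 1 := by
    intro y hyC hyco
    set x : G := ((y : ↥N) : G) with hxdef
    set V : Subgroup G := pCore p G with hVdef
    have hVn : V.Normal := CharPAux.pCore_normal
    have hVp : IsPGroup p V := CharPAux.pCore_isPGroup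
    have hVnorm : ∀ g : G, g ∈ (Subgroup.normalizer (V : Set _)) := by
      intro g
      rw [Subgroup.mem_normalizer_iff]
      intro h
      constructor
      · exact fun hh => hVn.conj_mem h hh g
      · intro hh
        have := hVn.conj_mem _ hh g⁻¹
        rwa [show g⁻¹ * (g * h * g⁻¹) * g⁻¹⁻¹ = h by group] at this
    have hP₀R : P.subgroupOf N ≤ R :=
      CharPAux.le_pCore Subgroup.normal_in_normalizer (IsPGroup.comap_subtype hPp)
    have hxB : ∀ b ∈ P, Commute x b := by
      intro b hb
      have hbN : b ∈ N := Subgroup.le_normalizer hb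
      have hbR : (⟨b, hbN⟩ : ↥N) ∈ R := hP₀R (Subgroup.mem_subgroupOf.mpr hb)
      have hcomm := Subgroup.mem_centralizer_iff.mp hyC _ hbR
      have hcoe := congrArg Subtype.val hcomm
      exact (by simpa using hcoe : b * x = x * b).symm
    have horder : orderOf x = orderOf y :=
      orderOf_injective N.subtype Subtype.coe_injective y
    have hcoV : Nat.Coprime (orderOf x) (Nat.card V) := by
      obtain ⟨k, hk⟩ := IsPGroup.iff_card.mp hVp
      rw [hk, horder]
      exact Nat.Coprime.pow_right k hyco
    have hmainV : ∀ v ∈ V, (∀ b ∈ P, Commute v b) → Commute v x := by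
      intro v hv hvb
      have hvN : v ∈ N := by
        rw [hNdef, Subgroup.mem_normalizer_iff]
        intro h
        constructor
        · intro hh
          rw [CharPAux.conj_fix (hvb h hh).eq]
          exact hh
        · intro hh
          have hc := hvb _ hh
          have e := CharPAux.conj_fix' hc.eq
          rw [show v⁻¹ * (v * h * v⁻¹) * v = h by group] at e
          rw [e]
          exact hh
      have hvR : (⟨v, hvN⟩ : ↥N) ∈ R := by
        apply CharPAux.le_pCore (CharPAux.normal_subgroupOf_of_normal hVn)
          (IsPGroup.comap_subtype hVp)
        exact Subgroup.mem_subgroupOf.mpr hv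
      have hcomm := Subgroup.mem_centralizer_iff.mp hyC _ hvR
      have hcoe := congrArg Subtype.val hcomm
      exact (by simpa using hcoe : v * x = x * v)
    have hconc : ∀ v ∈ V, Commute v x :=
      CharPAux.axb (Nat.card V) V P x rfl (hVnorm x) (fun b _ => hVnorm b) hVp hPp hxB hcoV hmainV
    have hxV : x ∈ V := hG (Subgroup.mem_centralizer_iff.mpr fun v hv => (hconc v hv).eq)
    have hdvd : orderOf x ∣ Nat.card V := by
      have := orderOf_dvd_natCard (⟨x, hxV⟩ : V)
      rwa [← orderOf_injective V.subtype Subtype.coe_injective ⟨x, hxV⟩] at this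
    have hone : orderOf x ∣ 1 := hcoV ▸ Nat.dvd_gcd dvd_rfl hdvd
    have hx1 : x = 1 := orderOf_eq_one_iff.mp (Nat.eq_one_of_dvd_one hone)
    have hx2 : x = ((1 : ↥N) : G) := by simpa using hx1
    exact Subtype.ext hx2
  have hCp : IsPGroup p C := by
    intro g
    set y : ↥N := (g : ↥N) with hydef
    set m := orderOf y with hmdef
    set a := m.factorization p with hadef
    refine ⟨a, ?_⟩
    have hyC : y ∈ C := g.2
    have hy' : y ^ p ^ a ∈ C := pow_mem hyC _
    have hmpos : m ≠ 0 := (orderOf_pos y).ne'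
    have hdvd : p ^ a ∣ m := Nat.ordProj_dvd m p
    have horder : orderOf (y ^ p ^ a) = m / p ^ a := by
      rw [orderOf_pow, ← hmdef, Nat.gcd_eq_right hdvd]
    have hcop : Nat.Coprime (orderOf (y ^ p ^ a)) p := by
      rw [horder]
      exact (Nat.coprime_ordCompl Fact.out hmpos).symm
    have hyone : y ^ p ^ a = 1 := key _ hy' hcop
    have : (g : ↥N) ^ p ^ a = 1 := hyone
    exact Subtype.ext (by simpa using this)
  exact CharPAux.le_pCore hCn hCp
end

section
/- Let Q be a p-subgroup of a finite group G such that C_G(Q) has characteristic p, and let P be a p-subgroup of G containing Q. Then C_G(P) has characteristic p. -/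
section Aux

variable {p : ℕ} {G : Type*} [Group G]

theorem bot_normal' : (⊥ : Subgroup G).Normal := by
  constructor
  intro n hn g
  rw [Subgroup.mem_bot] at hn ⊢
  simp [hn]

theorem mem_pCore_exists {x : G} (hx : x ∈ pCore p G) :
    ∃ N : Subgroup G, N.Normal ∧ IsPGroup p N ∧ x ∈ N := by
  unfold pCore at hx
  refine Subgroup.iSup_induction
    (fun N : Subgroup G => ⨆ (_ : N.Normal) (_ : IsPGroup p N), N)
    (C := fun y => ∃ N : Subgroup G, N.Normal ∧ IsPGroup p N ∧ y ∈ N) hx ?_ ?_ ?_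
  · intro N y hy
    by_cases h1 : N.Normal
    · by_cases h2 : IsPGroup p N
      · simp only [iSup_pos h1, iSup_pos h2] at hy
        exact ⟨N, h1, h2, hy⟩
      · simp only [iSup_pos h1, iSup_neg h2, Subgroup.mem_bot] at hy
        subst hy
        exact ⟨⊥, bot_normal', IsPGroup.of_bot, Subgroup.one_mem ⊥⟩
    · simp only [iSup_neg h1, Subgroup.mem_bot] at hy
      subst hy
      exact ⟨⊥, bot_normal', IsPGroup.of_bot, Subgroup.one_mem ⊥⟩
  · exact ⟨⊥, bot_normal', IsPGroup.of_bot, Subgroup.one_mem ⊥⟩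
  · rintro y z ⟨N1, hn1, hp1, hy⟩ ⟨N2, hn2, hp2, hz⟩
    haveI := hn1; haveI := hn2
    exact ⟨N1 ⊔ N2, inferInstance, IsPGroup.to_sup_of_normal_right hp1 hp2,
      mul_mem ((le_sup_left : N1 ≤ N1 ⊔ N2) hy) ((le_sup_right : N2 ≤ N1 ⊔ N2) hz)⟩

theorem le_pCore {N : Subgroup G} (h1 : N.Normal) (h2 : IsPGroup p N) : N ≤ pCore p G := by
  unfold pCore
  refine le_trans ?_ (le_iSup (fun M : Subgroup G => ⨆ (_ : M.Normal) (_ : IsPGroup p M), M) N)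
  rw [iSup_pos h1, iSup_pos h2]

theorem pCore_normal : (pCore p G).Normal := by
  constructor
  intro n hn g
  obtain ⟨N, hN, hNp, hnN⟩ := mem_pCore_exists hn
  exact le_pCore hN hNp (hN.conj_mem n hnN g)

theorem isPGroup_pCore : IsPGroup p (pCore p G) := by
  rintro ⟨x, hx⟩
  obtain ⟨N, _, hNp, hxN⟩ := mem_pCore_exists hx
  obtain ⟨k, hk⟩ := hNp ⟨x, hxN⟩
  refine ⟨k, ?_⟩
  have hx1 : x ^ p ^ k = 1 := by
    simpa using congrArg (fun z : ↥N => (z : G)) hk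
  exact Subtype.ext (by simpa using hx1)

theorem centralizer_normal_of_normal {N : Subgroup G} (hN : N.Normal) :
    (Subgroup.centralizer (N : Set G)).Normal := by
  constructor
  intro c hc g
  rw [Subgroup.mem_centralizer_iff] at hc ⊢
  intro m hm
  have h1 : g⁻¹ * m * g ∈ N := by
    have := hN.conj_mem m hm g⁻¹
    simpa using this
  have h2 := hc _ h1
  calc m * (g * c * g⁻¹) = g * ((g⁻¹ * m * g) * c) * g⁻¹ := by group
    _ = g * (c * (g⁻¹ * m * g)) * g⁻¹ := by rw [h2]
    _ = g * c * g⁻¹ * m := by group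

theorem mem_normalizer_of_conj {K : Subgroup G} {g : G}
    (h1 : ∀ k ∈ K, g * k * g⁻¹ ∈ K) (h2 : ∀ k ∈ K, g⁻¹ * k * g ∈ K) : g ∈ (Subgroup.normalizer (K : Set G)) := by
  rw [Subgroup.mem_normalizer_iff]
  intro h
  constructor
  · exact fun hh => h1 h hh
  · intro hh
    have e : g⁻¹ * (g * h * g⁻¹) * g = h := by group
    exact e ▸ h2 _ hh

theorem mem_normalizer_inf {A B : Subgroup G} {g : G} (ha : g ∈ (Subgroup.normalizer (A : Set G)))
    (hb : g ∈ (Subgroup.normalizer (B : Set G))) : g ∈ (Subgroup.normalizer ((A ⊓ B : Subgroup G) : Set G)) := by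
  rw [Subgroup.mem_normalizer_iff] at ha hb ⊢
  intro h
  rw [Subgroup.mem_inf, Subgroup.mem_inf]
  exact and_congr (ha h) (hb h)

theorem mem_normalizer_normalizer_of_conj {K : Subgroup G} {g : G}
    (h1 : ∀ k ∈ K, g * k * g⁻¹ ∈ K) (h2 : ∀ k ∈ K, g⁻¹ * k * g ∈ K) :
    g ∈ (Subgroup.normalizer ((Subgroup.normalizer (K : Set G) : Subgroup G) : Set G)) := by
  have main : ∀ (g' : G), (∀ k ∈ K, g' * k * g'⁻¹ ∈ K) → (∀ k ∈ K, g'⁻¹ * k * g' ∈ K) →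
      ∀ h ∈ (Subgroup.normalizer (K : Set G)), g' * h * g'⁻¹ ∈ (Subgroup.normalizer (K : Set G)) := by
    intro g' hc1 hc2 h hh
    apply mem_normalizer_of_conj
    · intro k hk
      have e : (g' * h * g'⁻¹) * k * (g' * h * g'⁻¹)⁻¹ = g' * (h * (g'⁻¹ * k * g') * h⁻¹) * g'⁻¹ := by
        group
      rw [e]
      exact hc1 _ ((Subgroup.mem_normalizer_iff.mp hh _).mp (hc2 k hk))
    · intro k hk
      have e : (g' * h * g'⁻¹)⁻¹ * k * (g' * h * g'⁻¹) = g' * (h⁻¹ * (g'⁻¹ * k * g') * h) * g'⁻¹ := by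
        group
      rw [e]
      refine hc1 _ ?_
      have h3 := (Subgroup.mem_normalizer_iff.mp ((Subgroup.normalizer (K : Set G)).inv_mem hh) _).mp (hc2 k hk)
      simpa using h3
  refine mem_normalizer_of_conj (fun h hh => main g h1 h2 h hh) (fun h hh => ?_)
  have := main g⁻¹ (fun k hk => by simpa using h2 k hk) (fun k hk => by simpa using h1 k hk) h hh
  simpa using this

theorem normalizer_le_normalizer_centralizer (Q : Subgroup G) :
    (Subgroup.normalizer (Q : Set G)) ≤ (Subgroup.normalizer ((Subgroup.centralizer (Q : Set G) : Subgroup G) : Set G)) := by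
  intro g hg
  have key : ∀ g' ∈ (Subgroup.normalizer (Q : Set G)), ∀ c ∈ Subgroup.centralizer (Q : Set G),
      g' * c * g'⁻¹ ∈ Subgroup.centralizer (Q : Set G) := by
    intro g' hg' c hc
    rw [Subgroup.mem_centralizer_iff] at hc ⊢
    intro q hq
    have h1 : g'⁻¹ * q * g' ∈ Q := by
      have := (Subgroup.mem_normalizer_iff.mp ((Subgroup.normalizer (Q : Set G)).inv_mem hg') q).mp hq
      simpa using this
    have h2 := hc _ h1
    calc q * (g' * c * g'⁻¹) = g' * ((g'⁻¹ * q * g') * c) * g'⁻¹ := by group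
      _ = g' * (c * (g'⁻¹ * q * g')) * g'⁻¹ := by rw [h2]
      _ = g' * c * g'⁻¹ * q := by group
  exact mem_normalizer_of_conj (key g hg) (fun c hc => by
    simpa using key g⁻¹ ((Subgroup.normalizer (Q : Set G)).inv_mem hg) c hc)

theorem mem_centralizer_zpowers_iff {x y : G} :
    y ∈ Subgroup.centralizer ((Subgroup.zpowers x : Subgroup G) : Set G) ↔ x * y = y * x := by
  rw [Subgroup.mem_centralizer_iff]
  constructor
  · intro h
    exact h x (Subgroup.mem_zpowers x)
  · intro h m hm
    rw [SetLike.mem_coe, Subgroup.mem_zpowers_iff] at hm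
    obtain ⟨k, rfl⟩ := hm
    exact (Commute.zpow_left (h : Commute x y) k : Commute (x ^ k) y)

theorem card_lt_of_lt {G : Type*} [Group G] [Finite G] {A B : Subgroup G} (h : A < B) :
    Nat.card ↥A < Nat.card ↥B := by
  have h1 : (A : Set G) ⊂ (B : Set G) := by
    rw [Set.ssubset_iff_of_subset (by exact_mod_cast h.le)]
    obtain ⟨x, hxB, hxA⟩ := SetLike.exists_of_lt h
    exact ⟨x, hxB, hxA⟩
  have := Set.ncard_lt_ncard h1 (Set.toFinite _)
  rw [← Nat.card_coe_set_eq, ← Nat.card_coe_set_eq] at this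
  exact this

end Aux

section AmbCore

variable {p : ℕ} {G : Type*} [Group G]

/-- The `p`-core of a subgroup `H`, viewed as a subgroup of the ambient group. -/
def ambCore (p : ℕ) {G : Type*} [Group G] (H : Subgroup G) : Subgroup G :=
  (pCore p ↥H).map H.subtype

theorem ambCore_le (H : Subgroup G) : ambCore p H ≤ H :=
  Subgroup.map_subtype_le _

theorem isPGroup_ambCore (H : Subgroup G) : IsPGroup p (ambCore p H) :=
  isPGroup_pCore.map _

theorem conj_mem_ambCore {H : Subgroup G} {g : G} (hg : g ∈ (Subgroup.normalizer (H : Set G))) :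
    ∀ w ∈ ambCore p H, g * w * g⁻¹ ∈ ambCore p H := by
  have hmem : ∀ h : G, h ∈ H → g * h * g⁻¹ ∈ H := fun h hh =>
    (Subgroup.mem_normalizer_iff.mp hg h).mp hh
  have hmem' : ∀ h : G, h ∈ H → g⁻¹ * h * g ∈ H := by
    intro h hh
    have := (Subgroup.mem_normalizer_iff.mp ((Subgroup.normalizer (H : Set G)).inv_mem hg) h).mp hh
    simpa using this
  intro w hw
  obtain ⟨w', hw', hww⟩ := hw
  let e : ↥H ≃* ↥H :=
  { toFun := fun h => ⟨g * h * g⁻¹, hmem h h.2⟩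
    invFun := fun h => ⟨g⁻¹ * h * g, hmem' h h.2⟩
    left_inv := by intro h; ext; simp only []; group
    right_inv := by intro h; ext; simp only []; group
    map_mul' := by intro a b; ext; simp only [Subgroup.coe_mul]; group }
  obtain ⟨N, hN, hNp, hwN⟩ := mem_pCore_exists hw'
  have h1 : (N.map e.toMonoidHom).Normal := hN.map e.toMonoidHom e.surjective
  have h2 : IsPGroup p (N.map e.toMonoidHom) := hNp.map e.toMonoidHom
  have h4 : e w' ∈ pCore p ↥H := le_pCore h1 h2 ⟨w', hwN, rfl⟩
  refine ⟨e w', h4, ?_⟩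
  show (g * ↑w' * g⁻¹ : G) = g * w * g⁻¹
  rw [show ((w' : G) = w) from hww]

theorem normalizer_le_normalizer_ambCore {H : Subgroup G} :
    (Subgroup.normalizer (H : Set G)) ≤ (Subgroup.normalizer ((ambCore p H : Subgroup G) : Set G)) := by
  intro g hg
  exact mem_normalizer_of_conj (conj_mem_ambCore hg)
    (fun w hw => by simpa using conj_mem_ambCore ((Subgroup.normalizer (H : Set G)).inv_mem hg) w hw)

theorem mem_ambCore_of_hasCharP {H : Subgroup G} (hH : HasCharP p ↥H) {g : G} (hg : g ∈ H)
    (hcomm : ∀ w ∈ ambCore p H, w * g = g * w) : g ∈ ambCore p H := by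
  have h1 : (⟨g, hg⟩ : ↥H) ∈ Subgroup.centralizer ((pCore p ↥H : Subgroup ↥H) : Set ↥H) := by
    rw [Subgroup.mem_centralizer_iff]
    intro m hm
    have hmem : (m : G) ∈ ambCore p H := ⟨m, hm, rfl⟩
    exact Subtype.ext (hcomm _ hmem)
  exact ⟨⟨g, hg⟩, hH h1, rfl⟩

theorem exists_mem_normalizer_of_lt [Finite G] [Fact p.Prime] {D W : Subgroup G}
    (hW : IsPGroup p W) (hDW : D < W) :
    ∃ t : G, t ∈ W ∧ t ∉ D ∧ t ∈ (Subgroup.normalizer (D : Set G)) := by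
  haveI : Group.IsNilpotent ↥W := hW.isNilpotent
  have hnc := normalizerCondition_of_isNilpotent (G := ↥W)
  have hlt : D.subgroupOf W < ⊤ := by
    rw [lt_top_iff_ne_top]
    intro h
    exact absurd (hDW.trans_le (Subgroup.subgroupOf_eq_top.mp h)) (lt_irrefl _)
  obtain ⟨t, htn, htd⟩ := SetLike.exists_of_lt (hnc _ hlt)
  refine ⟨t, t.2, fun h => htd (Subgroup.mem_subgroupOf.mpr h), ?_⟩
  apply mem_normalizer_of_conj
  · intro k hk
    have hkW : k ∈ W := hDW.le hk
    have h2 := (Subgroup.mem_normalizer_iff.mp htn ⟨k, hkW⟩).mp (Subgroup.mem_subgroupOf.mpr hk)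
    have h3 := Subgroup.mem_subgroupOf.mp h2
    simpa using h3
  · intro k hk
    have hkW : k ∈ W := hDW.le hk
    have h2 := (Subgroup.mem_normalizer_iff.mp ((Subgroup.normalizer ((D.subgroupOf W : Subgroup ↥W) : Set ↥W)).inv_mem htn)
      ⟨k, hkW⟩).mp (Subgroup.mem_subgroupOf.mpr hk)
    have h3 := Subgroup.mem_subgroupOf.mp h2
    simpa using h3

end AmbCore

open scoped commutatorElement

section AxB

variable {p : ℕ} {G : Type*} [Group G]

theorem axb [Finite G] [Fact p.Prime] :
    ∀ (n : ℕ) (W B : Subgroup G) (x : G), Nat.card ↥W ≤ n →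
      IsPGroup p W → IsPGroup p B →
      x ∈ (Subgroup.normalizer (W : Set G)) → B ≤ (Subgroup.normalizer (W : Set G)) →
      x ∈ Subgroup.centralizer (B : Set G) →
      (∀ w ∈ W ⊓ Subgroup.centralizer (B : Set G), x * w = w * x) →
      Nat.Coprime (orderOf x) p →
      ∀ w ∈ W, x * w = w * x := by
  intro n
  induction n with
  | zero =>
    intro W B x hcard _ _ _ _ _ _ _ w hw
    have : 0 < Nat.card ↥W := Nat.card_pos
    omega
  | succ n IH =>
    intro W B x hcard hW hB hxW hBW hxB hcent hcop
    by_cases htriv : ∀ w ∈ W, x * w = w * x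
    · exact htriv
    set D := W ⊓ Subgroup.centralizer ((Subgroup.zpowers x : Subgroup G) : Set G) with hDdef
    have hDmem : ∀ {d : G}, d ∈ D ↔ d ∈ W ∧ x * d = d * x := by
      intro d
      rw [hDdef, Subgroup.mem_inf, mem_centralizer_zpowers_iff]
    have hDW : D < W := by
      refine lt_of_le_of_ne inf_le_left ?_
      intro h
      apply htriv
      intro w hw
      rw [← h] at hw
      exact (hDmem.mp hw).2
    -- x fixes D pointwise under conjugation
    have hxD : ∀ d ∈ D, x * d * x⁻¹ = d := by
      intro d hd
      rw [(hDmem.mp hd).2, mul_inv_cancel_right]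
    have hxD' : ∀ d ∈ D, x⁻¹ * d * x = d := by
      intro d hd
      have h2 := (hDmem.mp hd).2
      rw [mul_assoc, ← h2, inv_mul_cancel_left]
    -- B normalizes D
    have hBD : ∀ b ∈ B, ∀ d ∈ D, b * d * b⁻¹ ∈ D := by
      intro b hb d hd
      obtain ⟨hdW, hdx⟩ := hDmem.mp hd
      have hxb : b * x = x * b := Subgroup.mem_centralizer_iff.mp hxB b hb
      have c1 : Commute x b := hxb.symm
      refine hDmem.mpr ⟨(Subgroup.mem_normalizer_iff.mp (hBW hb) d).mp hdW, ?_⟩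
      have hxbx : x * b * x⁻¹ = b := mul_inv_eq_iff_eq_mul.mpr c1
      have hxbix : x * b⁻¹ * x⁻¹ = b⁻¹ := mul_inv_eq_iff_eq_mul.mpr c1.inv_right
      have hdconj : x * d * x⁻¹ = d := hxD d hd
      have h9 : x * (b * d * b⁻¹) * x⁻¹ = b * d * b⁻¹ := by
        calc x * (b * d * b⁻¹) * x⁻¹
            = (x * b * x⁻¹) * (x * d * x⁻¹) * (x * b⁻¹ * x⁻¹) := by group
          _ = b * d * b⁻¹ := by rw [hxbx, hxbix, hdconj]
      calc x * (b * d * b⁻¹) = (x * (b * d * b⁻¹) * x⁻¹) * x := by group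
        _ = b * d * b⁻¹ * x := by rw [h9]
    by_cases hnorm : ∀ w ∈ W, w ∈ (Subgroup.normalizer (D : Set G))
    · -- D is normal in W: counting + commutator argument
      set D' := D.subgroupOf W with hD'def
      haveI hD'n : D'.Normal := by
        constructor
        intro d hd w
        refine Subgroup.mem_subgroupOf.mpr ?_
        have h1 := (Subgroup.mem_normalizer_iff.mp (hnorm (w : G) w.2) (d : G)).mp
          (Subgroup.mem_subgroupOf.mp hd)
        simpa using h1
      have hconjW : ∀ (b : ↥B) (w : ↥W), (b : G) * w * (b : G)⁻¹ ∈ W := fun b w =>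
        (Subgroup.mem_normalizer_iff.mp (hBW b.2) w).mp w.2
      letI act : MulAction ↥B (↥W ⧸ D') :=
      { smul := fun b => Quotient.map' (fun w => (⟨b * w * (b : G)⁻¹, hconjW b w⟩ : ↥W))
          (by
            intro w₁ w₂ h
            rw [QuotientGroup.leftRel_apply] at h ⊢
            refine Subgroup.mem_subgroupOf.mpr ?_
            have hh : ((w₁⁻¹ * w₂ : ↥W) : G) ∈ D := Subgroup.mem_subgroupOf.mp h
            have e : (((⟨b * w₁ * (b : G)⁻¹, hconjW b w₁⟩ : ↥W)⁻¹ *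
                ⟨b * w₂ * (b : G)⁻¹, hconjW b w₂⟩ : ↥W) : G)
                = (b : G) * ((w₁⁻¹ * w₂ : ↥W) : G) * (b : G)⁻¹ := by
              push_cast
              group
            rw [e]
            exact hBD b b.2 _ hh)
        one_smul := by
          intro q
          induction q using Quotient.inductionOn' with
          | h w =>
            show Quotient.map' _ _ (Quotient.mk'' w) = Quotient.mk'' w
            rw [Quotient.map'_mk'']
            congr 1
            ext
            simp
        mul_smul := by
          intro b₁ b₂ q
          induction q using Quotient.inductionOn' with
          | h w =>
            show Quotient.map' _ _ (Quotient.mk'' w) =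
              Quotient.map' _ _ (Quotient.map' _ _ (Quotient.mk'' w))
            rw [Quotient.map'_mk'', Quotient.map'_mk'', Quotient.map'_mk'']
            congr 1
            ext
            push_cast
            group }
      obtain ⟨e, he⟩ := (IsPGroup.iff_card).mp hW
      have hdvd : Nat.card (↥W ⧸ D') ∣ p ^ e :=
        ⟨Nat.card ↥D', by rw [← he, Subgroup.card_eq_card_quotient_mul_card_subgroup D']⟩
      obtain ⟨i, hi, hcardq⟩ := (Nat.dvd_prime_pow (Fact.out : p.Prime)).mp hdvd
      have hine : i ≠ 0 := by
        intro h0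
        rw [h0, pow_zero] at hcardq
        haveI : Subsingleton (↥W ⧸ D') := Finite.card_le_one_iff_subsingleton.mp (le_of_eq hcardq)
        have hWD : ∀ w : ↥W, (w : G) ∈ D := by
          intro w
          have h5 : (QuotientGroup.mk w : ↥W ⧸ D') = QuotientGroup.mk 1 := Subsingleton.elim _ _
          have h6 := (QuotientGroup.eq).mp h5
          have h7 : ((w⁻¹ * 1 : ↥W) : G) ∈ D := Subgroup.mem_subgroupOf.mp h6
          simp only [mul_one] at h7
          have := D.inv_mem h7
          simpa using this
        exact absurd (fun w hw => hWD ⟨w, hw⟩ : W ≤ D) (lt_iff_le_not_ge.mp hDW).2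
      have hpq : p ∣ Nat.card (↥W ⧸ D') := by
        rw [hcardq]
        exact dvd_pow_self p hine
      have hone : (QuotientGroup.mk (1 : ↥W) : ↥W ⧸ D') ∈
          MulAction.fixedPoints ↥B (↥W ⧸ D') := by
        intro b
        show Quotient.map' _ _ (Quotient.mk'' (1 : ↥W)) = Quotient.mk'' (1 : ↥W)
        rw [Quotient.map'_mk'']
        congr 1
        ext
        simp
      obtain ⟨q, hqfix, hqne⟩ :=
        IsPGroup.exists_fixed_point_of_prime_dvd_card_of_fixed_point hB (↥W ⧸ D') hpq hone
      obtain ⟨w₁, rfl⟩ := Quotient.exists_rep q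
      have hw₁D : (w₁ : G) ∉ D := by
        intro h
        apply hqne
        show (QuotientGroup.mk (1 : ↥W) : ↥W ⧸ D') = QuotientGroup.mk w₁
        rw [QuotientGroup.eq]
        refine Subgroup.mem_subgroupOf.mpr ?_
        simpa using h
      have hw₁E : ∀ b ∈ B, ((w₁ : G))⁻¹ * (b * w₁ * b⁻¹) ∈ D := by
        intro b hb
        have h5 := hqfix ⟨b, hb⟩
        have h6 : (Quotient.mk'' (⟨(b : G) * ↑w₁ * (b : G)⁻¹, hconjW ⟨b, hb⟩ w₁⟩ : ↥W) :
            ↥W ⧸ D') = Quotient.mk'' w₁ :=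
          (Quotient.map'_mk''
            (fun w : ↥W => (⟨(b : G) * ↑w * (b : G)⁻¹, hconjW ⟨b, hb⟩ w⟩ : ↥W)) _ w₁).symm.trans h5
        have h7 := (QuotientGroup.eq).mp h6
        have h8 : (((⟨(b : G) * ↑w₁ * (b : G)⁻¹, hconjW ⟨b, hb⟩ w₁⟩ : ↥W)⁻¹ * w₁ : ↥W) : G) ∈ D :=
          Subgroup.mem_subgroupOf.mp h7
        have e : (((⟨(b : G) * ↑w₁ * (b : G)⁻¹, hconjW ⟨b, hb⟩ w₁⟩ : ↥W)⁻¹ * w₁ : ↥W) : G)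
            = b * (w₁ : G)⁻¹ * b⁻¹ * w₁ := by
          push_cast
          group
        rw [e] at h8
        have h9 := D.inv_mem h8
        have e2 : (b * (w₁ : G)⁻¹ * b⁻¹ * w₁)⁻¹ = ((w₁ : G))⁻¹ * (b * w₁ * b⁻¹) := by group
        rwa [e2] at h9
      by_cases hEW : ∀ z ∈ W, ∀ b ∈ B, z⁻¹ * (b * z * b⁻¹) ∈ D
      · -- three subgroups argument
        have hWBD : ⁅W, B⁆ ≤ D := by
          rw [Subgroup.commutator_le]
          intro g₁ hg₁ g₂ hg₂
          have h5 := hEW g₁⁻¹ (W.inv_mem hg₁) g₂ hg₂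
          have e : g₁⁻¹⁻¹ * (g₂ * g₁⁻¹ * g₂⁻¹) = ⁅g₁, g₂⁆ := by
            rw [commutatorElement_def]; group
          rwa [e] at h5
        have h1 : ⁅(⁅W, B⁆ : Subgroup G), Subgroup.zpowers x⁆ = ⊥ := by
          rw [Subgroup.commutator_eq_bot_iff_le_centralizer]
          exact le_trans hWBD inf_le_right
        have h2 : ⁅(⁅B, Subgroup.zpowers x⁆ : Subgroup G), W⁆ = ⊥ := by
          have hbx : ⁅B, Subgroup.zpowers x⁆ = (⊥ : Subgroup G) := by
            rw [Subgroup.commutator_eq_bot_iff_le_centralizer]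
            intro b hb
            exact mem_centralizer_zpowers_iff.mpr (Subgroup.mem_centralizer_iff.mp hxB b hb).symm
          rw [hbx, Subgroup.commutator_bot_left]
        have h3 := Subgroup.commutator_commutator_eq_bot_of_rotate h1 h2
        have hXWB : ⁅Subgroup.zpowers x, W⁆ ≤ Subgroup.centralizer (B : Set G) :=
          Subgroup.commutator_eq_bot_iff_le_centralizer.mp h3
        have hXWW : ⁅Subgroup.zpowers x, W⁆ ≤ W := by
          rw [Subgroup.commutator_le]
          intro g₁ hg₁ g₂ hg₂
          have hg₁n : g₁ ∈ (Subgroup.normalizer (W : Set G)) := Subgroup.zpowers_le.mpr hxW hg₁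
          have h4 : g₁ * g₂ * g₁⁻¹ ∈ W := (Subgroup.mem_normalizer_iff.mp hg₁n g₂).mp hg₂
          have e : ⁅g₁, g₂⁆ = (g₁ * g₂ * g₁⁻¹) * g₂⁻¹ := commutatorElement_def g₁ g₂
          rw [e]
          exact W.mul_mem h4 (W.inv_mem hg₂)
        intro w hw
        have hcmem := Subgroup.commutator_mem_commutator (Subgroup.mem_zpowers x) hw
        have hcW : ⁅x, w⁆ ∈ W := hXWW hcmem
        have hcB : ⁅x, w⁆ ∈ Subgroup.centralizer (B : Set G) := hXWB hcmem
        have hxc : x * ⁅x, w⁆ = ⁅x, w⁆ * x := hcent _ (Subgroup.mem_inf.mpr ⟨hcW, hcB⟩)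
        set c := ⁅x, w⁆ with hcdef
        have base : x * w = c * w * x := by
          rw [hcdef, commutatorElement_def]; group
        have key : ∀ k : ℕ, x ^ k * w = c ^ k * w * x ^ k := by
          intro k
          induction k with
          | zero => simp
          | succ k ih =>
            have hcomm : x * c ^ k = c ^ k * x := ((show Commute x c from hxc).pow_right k).eq
            calc x ^ (k + 1) * w = x * (x ^ k * w) := by rw [pow_succ']; group
              _ = x * (c ^ k * w * x ^ k) := by rw [ih]
              _ = (x * c ^ k) * (w * x ^ k) := by group
              _ = (c ^ k * x) * (w * x ^ k) := by rw [hcomm]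
              _ = c ^ k * (x * w) * x ^ k := by group
              _ = c ^ k * (c * w * x) * x ^ k := by rw [base]
              _ = c ^ (k + 1) * w * x ^ (k + 1) := by rw [pow_succ, pow_succ']; group
        have hm := key (orderOf x)
        rw [pow_orderOf_eq_one, one_mul, mul_one] at hm
        have hcm : c ^ orderOf x = 1 := by
          have h5 : c ^ orderOf x * w = 1 * w := by rw [← hm, one_mul]
          exact mul_right_cancel h5
        obtain ⟨j, hj⟩ := hW ⟨c, hcW⟩
        have hj' : c ^ p ^ j = 1 := by
          simpa using congrArg (fun z : ↥W => (z : G)) hj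
        have hd1 : orderOf c ∣ orderOf x := orderOf_dvd_of_pow_eq_one hcm
        have hd2 : orderOf c ∣ p ^ j := orderOf_dvd_of_pow_eq_one hj'
        have hc1 : orderOf c = 1 := by
          have hg1 : Nat.gcd (orderOf x) (p ^ j) = 1 := hcop.pow_right j
          have := Nat.dvd_gcd hd1 hd2
          rw [hg1, Nat.dvd_one] at this
          exact this
        have hceq : c = 1 := orderOf_eq_one_iff.mp hc1
        have : ⁅x, w⁆ = 1 := hceq
        exact commutatorElement_eq_one_iff_commute.mp this
      · -- proper subgroup E: apply induction hypothesis
        push_neg at hEW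
        obtain ⟨z₀, hz₀W, b₀, hb₀B, hz₀⟩ := hEW
        set E : Subgroup G :=
        { carrier := {z | z ∈ W ∧ ∀ b ∈ B, z⁻¹ * (b * z * b⁻¹) ∈ D}
          one_mem' := ⟨W.one_mem, by intro b hb; simpa using D.one_mem⟩
          mul_mem' := by
            rintro v u ⟨hvW, hv⟩ ⟨huW, hu⟩
            refine ⟨W.mul_mem hvW huW, ?_⟩
            intro b hb
            have d1 := hv b hb
            have d2 := hu b hb
            have hun : u ∈ (Subgroup.normalizer (D : Set G)) := hnorm u huW
            have h5 : u⁻¹ * (v⁻¹ * (b * v * b⁻¹)) * u ∈ D := by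
              have := (Subgroup.mem_normalizer_iff.mp ((Subgroup.normalizer (D : Set G)).inv_mem hun) _).mp d1
              simpa using this
            have e : (v * u)⁻¹ * (b * (v * u) * b⁻¹)
                = (u⁻¹ * (v⁻¹ * (b * v * b⁻¹)) * u) * (u⁻¹ * (b * u * b⁻¹)) := by group
            rw [e]
            exact D.mul_mem h5 d2
          inv_mem' := by
            rintro u ⟨huW, hu⟩
            refine ⟨W.inv_mem huW, ?_⟩
            intro b hb
            have d1 := hu b hb
            have hun : u ∈ (Subgroup.normalizer (D : Set G)) := hnorm u huW
            have h5 : u * (u⁻¹ * (b * u * b⁻¹))⁻¹ * u⁻¹ ∈ D := by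
              have h6 := D.inv_mem d1
              exact (Subgroup.mem_normalizer_iff.mp hun _).mp h6
            have e : u⁻¹⁻¹ * (b * u⁻¹ * b⁻¹) = u * (u⁻¹ * (b * u * b⁻¹))⁻¹ * u⁻¹ := by group
            rw [e]
            exact h5 } with hEdef
        have hEle : E ≤ W := fun z hz => hz.1
        have hElt : E < W := lt_of_le_of_ne hEle (by
          intro h
          exact hz₀ (by rw [← h] at hz₀W; exact hz₀W.2 b₀ hb₀B))
        have hcardE : Nat.card ↥E ≤ n := by
          have h5 := card_lt_of_lt hElt
          omega
        -- x normalizes E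
        have genE : ∀ y : G, y ∈ (Subgroup.normalizer (W : Set G)) → (∀ b ∈ B, y⁻¹ * b * y = b) →
            (∀ d ∈ D, y * d * y⁻¹ = d) → ∀ z ∈ E, y * z * y⁻¹ ∈ E := by
          intro y hyW hyB hyD z hz
          refine ⟨(Subgroup.mem_normalizer_iff.mp hyW z).mp hz.1, ?_⟩
          intro b hb
          have e : (y * z * y⁻¹)⁻¹ * (b * (y * z * y⁻¹) * b⁻¹)
              = y * (z⁻¹ * ((y⁻¹ * b * y) * z * (y⁻¹ * b * y)⁻¹)) * y⁻¹ := by group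
          rw [e, hyB b hb, hyD _ (hz.2 b hb)]
          exact hz.2 b hb
        have hxEn : x ∈ (Subgroup.normalizer (E : Set G)) := by
          have p1 : ∀ b ∈ B, x⁻¹ * b * x = b := by
            intro b hb
            have hxb : b * x = x * b := Subgroup.mem_centralizer_iff.mp hxB b hb
            rw [mul_assoc, hxb, inv_mul_cancel_left]
          have p2 : ∀ b ∈ B, x * b * x⁻¹ = b := by
            intro b hb
            have hxb : b * x = x * b := Subgroup.mem_centralizer_iff.mp hxB b hb
            rw [← hxb, mul_inv_cancel_right]
          refine mem_normalizer_of_conj (genE x hxW p1 hxD) (fun z hz => ?_)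
          have := genE x⁻¹ ((Subgroup.normalizer (W : Set G)).inv_mem hxW) (by simpa using p2)
            (by simpa using hxD') z hz
          simpa using this
        have hBEn : B ≤ (Subgroup.normalizer (E : Set G)) := by
          have genE2 : ∀ b₁ ∈ B, ∀ z ∈ E, b₁ * z * b₁⁻¹ ∈ E := by
            intro b₁ hb₁ z hz
            refine ⟨(Subgroup.mem_normalizer_iff.mp (hBW hb₁) z).mp hz.1, ?_⟩
            intro b hb
            have e : (b₁ * z * b₁⁻¹)⁻¹ * (b * (b₁ * z * b₁⁻¹) * b⁻¹)
                = b₁ * (z⁻¹ * ((b₁⁻¹ * b * b₁) * z * (b₁⁻¹ * b * b₁)⁻¹)) * b₁⁻¹ := by group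
            rw [e]
            exact hBD b₁ hb₁ _ (hz.2 _ (B.mul_mem (B.mul_mem (B.inv_mem hb₁) hb) hb₁))
          intro b₁ hb₁
          exact mem_normalizer_of_conj (genE2 b₁ hb₁)
            (fun z hz => by simpa using genE2 b₁⁻¹ (B.inv_mem hb₁) z hz)
        have hres := IH E B x hcardE (hW.to_le hEle) hB hxEn hBEn hxB
          (fun w hw => hcent w (Subgroup.mem_inf.mpr
            ⟨hEle (Subgroup.mem_inf.mp hw).1, (Subgroup.mem_inf.mp hw).2⟩))
          hcop
        exfalso
        apply hw₁D
        refine hDmem.mpr ⟨w₁.2, hres (w₁ : G) ⟨w₁.2, ?_⟩⟩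
        exact hw₁E
    · -- not everything normalizes D: contradiction via normalizer growth
      push_neg at hnorm
      obtain ⟨w₀, hw₀W, hw₀n⟩ := hnorm
      set N := W ⊓ (Subgroup.normalizer (D : Set G)) with hNdef
      have hNW : N < W := by
        refine lt_of_le_of_ne inf_le_left ?_
        intro h
        rw [← h] at hw₀W
        exact hw₀n (Subgroup.mem_inf.mp hw₀W).2
      have hcardN : Nat.card ↥N ≤ n := by
        have h5 := card_lt_of_lt hNW
        omega
      have hxN : x ∈ (Subgroup.normalizer (N : Set G)) := by
        refine mem_normalizer_inf hxW ?_
        exact mem_normalizer_normalizer_of_conj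
          (fun d hd => (hxD d hd).symm ▸ hd) (fun d hd => (hxD' d hd).symm ▸ hd)
      have hBN : B ≤ (Subgroup.normalizer (N : Set G)) := by
        intro b hb
        refine mem_normalizer_inf (hBW hb) ?_
        exact mem_normalizer_normalizer_of_conj (hBD b hb)
          (fun d hd => by simpa using hBD b⁻¹ (B.inv_mem hb) d hd)
      have hres := IH N B x hcardN (hW.to_le inf_le_left) hB hxN hBN hxB
        (fun w hw => hcent w (Subgroup.mem_inf.mpr
          ⟨(inf_le_left : N ≤ W) (Subgroup.mem_inf.mp hw).1, (Subgroup.mem_inf.mp hw).2⟩))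
        hcop
      obtain ⟨t, htW, htD, htn⟩ := exists_mem_normalizer_of_lt hW hDW
      exact absurd (hDmem.mpr ⟨htW, hres t (Subgroup.mem_inf.mpr ⟨htW, htn⟩)⟩) htD

end AxB

section Step

variable {p : ℕ} {G : Type*} [Group G]

theorem step_charP [Finite G] [Fact p.Prime] (H B : Subgroup G) (hH : HasCharP p ↥H)
    (hB : IsPGroup p B) (hBH : B ≤ (Subgroup.normalizer (H : Set G)))
    (hCB : Subgroup.centralizer (B : Set G) ≤ H) :
    HasCharP p ↥(Subgroup.centralizer (B : Set G)) := by
  set C := Subgroup.centralizer (B : Set G) with hCdef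
  set W := ambCore p H with hWdef
  show Subgroup.centralizer ((pCore p ↥C : Subgroup ↥C) : Set ↥C) ≤ pCore p ↥C
  refine le_pCore (centralizer_normal_of_normal pCore_normal) ?_
  -- the centralizer of the p-core of C is a p-group
  have hVn : ((W ⊓ C).subgroupOf C).Normal := by
    constructor
    intro v hv c
    have hv' := Subgroup.mem_subgroupOf.mp hv
    refine Subgroup.mem_subgroupOf.mpr (Subgroup.mem_inf.mpr ⟨?_, ?_⟩)
    · have hcH : (c : G) ∈ (Subgroup.normalizer (H : Set G)) := Subgroup.le_normalizer (hCB c.2)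
      have := conj_mem_ambCore hcH _ (Subgroup.mem_inf.mp hv').1
      simpa using this
    · have : (c : G) * v * (c : G)⁻¹ ∈ C :=
        C.mul_mem (C.mul_mem c.2 (Subgroup.mem_inf.mp hv').2) (C.inv_mem c.2)
      simpa using this
  have hVp : IsPGroup p ((W ⊓ C).subgroupOf C) :=
    ((isPGroup_ambCore H).to_inf_left).comap_subtype
  have hVle : (W ⊓ C).subgroupOf C ≤ pCore p ↥C := le_pCore hVn hVp
  intro y
  set g : G := ((y : ↥C) : G) with hgdef
  have hgC : g ∈ C := (y : ↥C).2
  have hgH : g ∈ H := hCB hgC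
  have hgV : ∀ v ∈ W ⊓ C, g * v = v * g := by
    intro v hv
    have hvC : v ∈ C := (Subgroup.mem_inf.mp hv).2
    have hvcore : (⟨v, hvC⟩ : ↥C) ∈ pCore p ↥C := hVle (Subgroup.mem_subgroupOf.mpr hv)
    have h5 := Subgroup.mem_centralizer_iff.mp y.2 ⟨v, hvC⟩ hvcore
    have h6 := congrArg (fun z : ↥C => (z : G)) h5
    simpa using h6.symm
  have hn0 : orderOf g ≠ 0 := (orderOf_pos g).ne'
  set a := (orderOf g).factorization p with ha
  set x := g ^ p ^ a with hxdef
  have hxord : orderOf x = ordCompl[p] (orderOf g) :=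
    orderOf_pow_of_dvd (pow_ne_zero a (Fact.out : p.Prime).ne_zero) (Nat.ordProj_dvd _ _)
  have hxcop : Nat.Coprime (orderOf x) p := by
    rw [hxord]
    exact (Nat.coprime_ordCompl (Fact.out : p.Prime) hn0).symm
  have hxH : x ∈ H := H.pow_mem hgH _
  have hxC : x ∈ C := C.pow_mem hgC _
  have hcomm := axb (Nat.card ↥W) W B x le_rfl (isPGroup_ambCore H) hB
    (normalizer_le_normalizer_ambCore (Subgroup.le_normalizer hxH))
    (le_trans hBH normalizer_le_normalizer_ambCore)
    hxC
    (fun w hw => ((Commute.pow_left (hgV w hw : Commute g w) (p ^ a)) : Commute x w))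
    hxcop
  have hxW : x ∈ W := mem_ambCore_of_hasCharP hH hxH (fun w hw => (hcomm w hw).symm)
  obtain ⟨j, hj⟩ := isPGroup_ambCore H (p := p) ⟨x, hxW⟩
  have hj' : x ^ p ^ j = 1 := by
    simpa using congrArg (fun z : ↥W => (z : G)) hj
  have hx1 : x = 1 := by
    have hd : orderOf x ∣ p ^ j := orderOf_dvd_of_pow_eq_one hj'
    have hg1 : Nat.gcd (orderOf x) (p ^ j) = 1 := hxcop.pow_right j
    have h5 := Nat.dvd_gcd (dvd_refl (orderOf x)) hd
    rw [hg1, Nat.dvd_one] at h5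
    exact orderOf_eq_one_iff.mp h5
  have hg1 : g ^ p ^ a = 1 := by rw [← hxdef]; exact hx1
  refine ⟨a, ?_⟩
  refine Subtype.ext (Subtype.ext ?_)
  push_cast
  exact hg1

end Step

/-- If `C_G(Q)` has characteristic `p` and `Q ≤ P` with `P` a `p`-subgroup, then
`C_G(P)` has characteristic `p`. -/
theorem stmt5 (p : ℕ) [Fact p.Prime] (G : Type*) [Group G] [Finite G]
    (Q P : Subgroup G) (hQ : IsPGroup p Q) (hP : IsPGroup p P) (hQP : Q ≤ P)
    (hC : HasCharP p ↥(Subgroup.centralizer (Q : Set G))) :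
    HasCharP p ↥(Subgroup.centralizer (P : Set G)) := by
  have main : ∀ (k : ℕ) (Q' : Subgroup G), Nat.card ↥P - Nat.card ↥Q' = k → Q' ≤ P →
      HasCharP p ↥(Subgroup.centralizer (Q' : Set G)) →
      HasCharP p ↥(Subgroup.centralizer (P : Set G)) := by
    intro k
    induction k using Nat.strong_induction_on with
    | _ k IH =>
      intro Q' hk hQ'P hC'
      by_cases heq : Q' = P
      · rwa [heq] at hC'
      · have hlt : Q' < P := lt_of_le_of_ne hQ'P heq
        obtain ⟨t, htP, htQ, htn⟩ := exists_mem_normalizer_of_lt hP hlt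
        set Q'' := Q' ⊔ Subgroup.zpowers t with hQ''def
        have hQ''P : Q'' ≤ P := sup_le hQ'P (Subgroup.zpowers_le.mpr htP)
        have hQ'Q'' : Q' < Q'' := by
          refine lt_of_le_of_ne le_sup_left ?_
          intro h
          apply htQ
          rw [h]
          exact Subgroup.mem_sup_right (Subgroup.mem_zpowers t)
        have hstep : HasCharP p ↥(Subgroup.centralizer ((Q'' : Subgroup G) : Set G)) := by
          refine step_charP (Subgroup.centralizer (Q' : Set G)) Q'' hC' (hP.to_le hQ''P) ?_ ?_
          · refine le_trans ?_ (normalizer_le_normalizer_centralizer Q')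
            exact sup_le Subgroup.le_normalizer (Subgroup.zpowers_le.mpr htn)
          · exact Subgroup.centralizer_le
              (by exact_mod_cast (le_sup_left : Q' ≤ Q''))
        refine IH (Nat.card ↥P - Nat.card ↥Q'') ?_ Q'' rfl hQ''P hstep
        have h1 : Nat.card ↥Q' < Nat.card ↥Q'' := card_lt_of_lt hQ'Q''
        have h2 : Nat.card ↥Q' < Nat.card ↥P := card_lt_of_lt hlt
        rw [← hk]
        exact Nat.sub_lt_sub_left h2 h1
  exact main _ Q rfl hQP hC
end
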